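/- Let s = β + it with β > 0 be a zero of the Riemann zeta function (so the alternating series sum is 0). Then the partial sums S_N(s) = Σ_{n=1}^{N} (-1)^{n-1} n^{-s} satisfy lim_{N→∞} -(1/log₂ N)·ln|S_N(s)| = β·ln 2. -/

import Mathlib

open Filter Topology Complex

lemma cpow_diff_bound (w : ℂ) (hw : 0 ≤ w.re) {x : ℝ} (hx : 1 ≤ x) :
    ‖(x:ℂ)^(-w) - ((x+1:ℝ):ℂ)^(-w)‖ ≤ ‖w‖ * x ^ (-w.re-1) := by
  have hx0 : (0:ℝ) < x := lt_of_lt_of_le one_pos hx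
  have key : ∀ t ∈ Set.uIcc (0:ℝ) 1, HasDerivAt (fun t : ℝ => ((x+t:ℝ):ℂ)^(-w))
      (-w * ((x+t:ℝ):ℂ)^(-w-1)) t := by
    intro t ht
    rw [Set.uIcc_of_le (by norm_num : (0:ℝ) ≤ 1)] at ht
    have h1 : HasDerivAt (fun z : ℂ => ((x:ℂ)+z)^(-w)) (-w * ((x:ℂ)+t)^(-w-1)) (t:ℂ) := by
      have := ((hasDerivAt_id ((t:ℝ):ℂ)).const_add (x:ℂ)).cpow_const (c := -w)
        (by left; simp only [Complex.add_re, Complex.ofReal_re, id_eq]; simpa using by linarith [ht.1] : (x:ℂ) + (t:ℝ) ∈ Complex.slitPlane)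
      simpa [mul_comm] using this
    have h2 := h1.comp_ofReal
    simpa [Complex.ofReal_add] using h2
  have hcont : ContinuousOn (fun t : ℝ => -w * ((x+t:ℝ):ℂ)^(-w-1)) (Set.uIcc (0:ℝ) 1) := by
    apply ContinuousOn.mul continuousOn_const
    apply ContinuousOn.cpow_const
    · exact (Complex.continuous_ofReal.comp (continuous_const.add continuous_id)).continuousOn
    · intro t ht
      rw [Set.uIcc_of_le (by norm_num : (0:ℝ) ≤ 1)] at ht
      left
      simp only [Complex.ofReal_re]
      linarith [ht.1]
  have hint := intervalIntegral.integral_eq_sub_of_hasDerivAt (a := (0:ℝ)) (b := 1)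
    (fun t ht => key t ht) (hcont.intervalIntegrable)
  have hb : ‖∫ t in (0:ℝ)..1, -w * ((x+t:ℝ):ℂ)^(-w-1)‖ ≤ (‖w‖ * x ^ (-w.re-1)) * |1 - (0:ℝ)| := by
    apply intervalIntegral.norm_integral_le_of_norm_le_const
    intro t ht
    rw [Set.uIoc_of_le (by norm_num : (0:ℝ) ≤ 1)] at ht
    obtain ⟨ht1, ht2⟩ := ht
    have hxt : 0 < x + t := by linarith
    rw [norm_mul, norm_neg]
    have : ‖((x+t:ℝ):ℂ)^(-w-1)‖ = (x+t) ^ ((-w-1).re) :=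
      Complex.norm_cpow_eq_rpow_re_of_pos hxt _
    rw [this]
    have hexp : (-w-1).re = -w.re - 1 := by simp
    rw [hexp]
    exact mul_le_mul_of_nonneg_left
      (Real.rpow_le_rpow_of_nonpos hx0 (by linarith : x ≤ x + t) (by linarith : -w.re - 1 ≤ 0))
      (norm_nonneg w)
  rw [hint] at hb
  simp only [sub_zero, abs_one, mul_one] at hb
  calc ‖(x:ℂ)^(-w) - ((x+1:ℝ):ℂ)^(-w)‖ = ‖((x+1:ℝ):ℂ)^(-w) - (x:ℂ)^(-w)‖ := norm_sub_rev _ _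
    _ ≤ ‖w‖ * x ^ (-w.re-1) := by
        have : ((fun t : ℝ => ((x+t:ℝ):ℂ)^(-w)) 1 - (fun t : ℝ => ((x+t:ℝ):ℂ)^(-w)) 0)
            = ((x+1:ℝ):ℂ)^(-w) - (x:ℂ)^(-w) := by norm_num
        rw [← this]
        exact hb

lemma hasDerivAt_ofReal_cpow_const'' {b t : ℝ} (h : 0 < b + t) (w : ℂ) :
    HasDerivAt (fun t : ℝ => ((b+t:ℝ):ℂ)^w) (w * ((b+t:ℝ):ℂ)^(w-1)) t := by
  have h1 : HasDerivAt (fun z : ℂ => ((b:ℂ)+z)^w) (w * ((b:ℂ)+t)^(w-1)) (t:ℂ) := by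
    have := ((hasDerivAt_id ((t:ℝ):ℂ)).const_add (b:ℂ)).cpow_const (c := w)
      (by left; simpa using h : (b:ℂ) + ((t:ℝ):ℂ) ∈ Complex.slitPlane)
    simpa [mul_comm] using this
  have h2 := h1.comp_ofReal
  simpa [Complex.ofReal_add] using h2


lemma second_diff_bound (s : ℂ) (hs : 0 < s.re) {x : ℝ} (hx : 1 ≤ x) :
    ‖(x:ℂ)^(-s) - 2*((x+1:ℝ):ℂ)^(-s) + ((x+2:ℝ):ℂ)^(-s)‖
      ≤ ‖s‖ * ‖s+1‖ * x ^ (-s.re-2) := by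
  have hx0 : (0:ℝ) < x := lt_of_lt_of_le one_pos hx
  set g : ℝ → ℂ := fun t => ((x+t:ℝ):ℂ)^(-s) - ((x+1+t:ℝ):ℂ)^(-s) with hg
  set g' : ℝ → ℂ := fun t => -s * (((x+t:ℝ):ℂ)^(-s-1) - ((x+1+t:ℝ):ℂ)^(-s-1)) with hg'
  have key : ∀ t ∈ Set.uIcc (0:ℝ) 1, HasDerivAt g (g' t) t := by
    intro t ht
    rw [Set.uIcc_of_le (by norm_num : (0:ℝ) ≤ 1)] at ht
    obtain ⟨ht1, ht2⟩ := ht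
    have d1 := hasDerivAt_ofReal_cpow_const'' (by linarith : (0:ℝ) < x + t) (-s)
    have d2 := hasDerivAt_ofReal_cpow_const'' (by linarith : (0:ℝ) < (x+1) + t) (-s)
    have := d1.fun_sub d2
    refine this.congr_deriv ?_
    show _ = -s * (((x+t:ℝ):ℂ)^(-s-1) - ((x+1+t:ℝ):ℂ)^(-s-1))
    ring
  have hcont : ContinuousOn g' (Set.uIcc (0:ℝ) 1) := by
    apply ContinuousOn.mul continuousOn_const
    apply ContinuousOn.sub
    · apply ContinuousOn.cpow_const
      · exact (Complex.continuous_ofReal.comp (continuous_const.add continuous_id)).continuousOn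
      · intro t ht
        rw [Set.uIcc_of_le (by norm_num : (0:ℝ) ≤ 1)] at ht
        left; simp only [Complex.ofReal_re]; linarith [ht.1]
    · apply ContinuousOn.cpow_const
      · exact (Complex.continuous_ofReal.comp (continuous_const.add continuous_id)).continuousOn
      · intro t ht
        rw [Set.uIcc_of_le (by norm_num : (0:ℝ) ≤ 1)] at ht
        left; simp only [Complex.ofReal_re]; linarith [ht.1]
  have hint := intervalIntegral.integral_eq_sub_of_hasDerivAt (a := (0:ℝ)) (b := 1) key
    (hcont.intervalIntegrable)
  have hb : ‖∫ t in (0:ℝ)..1, g' t‖ ≤ (‖s‖ * ‖s+1‖ * x ^ (-s.re-2)) * |1 - (0:ℝ)| := by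
    apply intervalIntegral.norm_integral_le_of_norm_le_const
    intro t ht
    rw [Set.uIoc_of_le (by norm_num : (0:ℝ) ≤ 1)] at ht
    obtain ⟨ht1, ht2⟩ := ht
    have hxt : 1 ≤ x + t := by linarith
    have := cpow_diff_bound (s+1) (by simp; linarith : 0 ≤ (s+1).re) hxt
    simp only [hg', norm_mul, norm_neg]
    have heq : ((x+t)+1 : ℝ) = (x+1+t : ℝ) := by ring
    rw [heq] at this
    have hexp : -(s+1).re - 1 = -s.re - 2 := by simp; ring
    rw [hexp] at this
    have hneg : (-(s+1) : ℂ) = -s-1 := by ring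
    rw [hneg] at this
    calc ‖s‖ * ‖((x+t:ℝ):ℂ)^(-s-1) - ((x+1+t:ℝ):ℂ)^(-s-1)‖
        ≤ ‖s‖ * (‖s+1‖ * (x+t) ^ (-s.re-2)) :=
          mul_le_mul_of_nonneg_left this (norm_nonneg s)
      _ ≤ ‖s‖ * (‖s+1‖ * x ^ (-s.re-2)) := by
          refine mul_le_mul_of_nonneg_left (mul_le_mul_of_nonneg_left ?_ (norm_nonneg _)) (norm_nonneg s)
          exact Real.rpow_le_rpow_of_nonpos hx0 (by linarith) (by linarith)
      _ = ‖s‖ * ‖s+1‖ * x ^ (-s.re-2) := by ring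
  rw [hint] at hb
  simp only [sub_zero, abs_one, mul_one] at hb
  have hval : g 1 - g 0 = -((x:ℂ)^(-s) - 2*((x+1:ℝ):ℂ)^(-s) + ((x+2:ℝ):ℂ)^(-s)) := by
    simp only [hg]
    have e1 : (x + 1 + 1 : ℝ) = (x + 2 : ℝ) := by ring
    have e2 : (x + 0 : ℝ) = x := by ring
    have e3 : (x + 1 + 0 : ℝ) = (x + 1 : ℝ) := by ring
    rw [e1, e2, e3]
    ring
  rw [hval] at hb
  rwa [norm_neg] at hb


lemma rpow_diff_ge (q : ℝ) (hq : 0 < q) {k : ℕ} (hk : 1 ≤ k) :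
    q * ((k:ℝ)+1)^(-q-1) ≤ (k:ℝ)^(-q) - ((k:ℝ)+1)^(-q) := by
  have hk0 : (1:ℝ) ≤ (k:ℝ) := by exact_mod_cast hk
  have key : ∀ t ∈ Set.uIcc (0:ℝ) 1, HasDerivAt (fun t : ℝ => ((k:ℝ)+t)^(-q))
      ((-q) * ((k:ℝ)+t)^(-q-1)) t := by
    intro t ht
    rw [Set.uIcc_of_le (by norm_num : (0:ℝ) ≤ 1)] at ht
    obtain ⟨ht1, ht2⟩ := ht
    have hb : ((k:ℝ)+t) ≠ 0 := by positivity
    have := (HasDerivAt.rpow_const ((hasDerivAt_id t).const_add (k:ℝ))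
      (Or.inl hb) (p := -q))
    simpa [mul_comm] using this
  have hcont : ContinuousOn (fun t : ℝ => (-q) * ((k:ℝ)+t)^(-q-1)) (Set.uIcc (0:ℝ) 1) := by
    apply ContinuousOn.mul continuousOn_const
    apply ContinuousOn.rpow_const (by fun_prop)
    intro t ht
    rw [Set.uIcc_of_le (by norm_num : (0:ℝ) ≤ 1)] at ht
    obtain ⟨ht1, ht2⟩ := ht
    have : (0:ℝ) < (k:ℝ) := by exact_mod_cast hk
    left; linarith
  have hint := intervalIntegral.integral_eq_sub_of_hasDerivAt (a := (0:ℝ)) (b := 1) key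
    (hcont.intervalIntegrable)
  have hmono : (∫ t in (0:ℝ)..1, (-q) * ((k:ℝ)+t)^(-q-1))
      ≤ ∫ t in (0:ℝ)..1, (-q) * ((k:ℝ)+1)^(-q-1) := by
    apply intervalIntegral.integral_mono_on (by norm_num) (hcont.intervalIntegrable)
      intervalIntegrable_const
    intro t ht
    obtain ⟨ht1, ht2⟩ := ht
    have h1 : ((k:ℝ)+t)^(-q-1) ≥ ((k:ℝ)+1)^(-q-1) :=
      Real.rpow_le_rpow_of_nonpos (by positivity) (by linarith) (by linarith)
    nlinarith
  rw [hint] at hmono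
  rw [intervalIntegral.integral_const] at hmono
  simp only [add_zero, smul_eq_mul, sub_zero, one_mul] at hmono
  nlinarith

lemma tail_sum_le (q : ℝ) (hq : 0 < q) {N : ℕ} (hN : 1 ≤ N) :
    ∀ M, N ≤ M → ∑ k ∈ Finset.Ico N M, ((k:ℝ)+1)^(-q-1) ≤ (1/q) * (N:ℝ)^(-q) := by
  have main : ∀ M, N ≤ M →
      ∑ k ∈ Finset.Ico N M, ((k:ℝ)+1)^(-q-1) ≤ (1/q) * ((N:ℝ)^(-q) - (M:ℝ)^(-q)) := by
    intro M hM
    induction M, hM using Nat.le_induction with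
    | base => simp
    | succ M hM ih =>
      rw [Finset.sum_Ico_succ_top hM]
      have h1 := rpow_diff_ge q hq (le_trans hN hM)
      have hq' : 0 < 1/q := by positivity
      push_cast
      calc (∑ k ∈ Finset.Ico N M, ((k:ℝ)+1)^(-q-1)) + ((M:ℝ)+1)^(-q-1)
          ≤ (1/q) * ((N:ℝ)^(-q) - (M:ℝ)^(-q)) + (1/q) * ((M:ℝ)^(-q) - ((M:ℝ)+1)^(-q)) := by
            apply add_le_add ih
            have h2 : ((M:ℝ)+1)^(-q-1) ≤ ((M:ℝ)^(-q) - ((M:ℝ)+1)^(-q)) / q :=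
              (le_div_iff₀' hq).mpr h1
            calc ((M:ℝ)+1)^(-q-1) ≤ ((M:ℝ)^(-q) - ((M:ℝ)+1)^(-q)) / q := h2
              _ = (1/q) * ((M:ℝ)^(-q) - ((M:ℝ)+1)^(-q)) := by ring
        _ = (1/q) * ((N:ℝ)^(-q) - ((M:ℝ)+1)^(-q)) := by ring
  intro M hM
  calc ∑ k ∈ Finset.Ico N M, ((k:ℝ)+1)^(-q-1) ≤ (1/q) * ((N:ℝ)^(-q) - (M:ℝ)^(-q)) := main M hM
    _ ≤ (1/q) * (N:ℝ)^(-q) := by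
        have : (0:ℝ) ≤ (M:ℝ)^(-q) := Real.rpow_nonneg (by positivity) _
        have hq' : (0:ℝ) < 1/q := by positivity
        nlinarith

lemma sum_Ico_telescope (f : ℕ → ℂ) {N M : ℕ} (h : N ≤ M) :
    ∑ k ∈ Finset.Ico N M, (f (k+1) - f k) = f M - f N := by
  induction M, h using Nat.le_induction with
  | base => simp
  | succ M hM ih => rw [Finset.sum_Ico_succ_top hM, ih]; ring

noncomputable def Spart (s : ℂ) (N : ℕ) : ℂ :=
  ∑ n ∈ Finset.Icc 1 N, (-1:ℂ)^(n+1) * (n:ℂ)^(-s)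

noncomputable def Fseq (s : ℂ) (N : ℕ) : ℂ :=
  Spart s N + (-1:ℂ)^N * ((3/4) * ((N:ℂ)+1)^(-s) - (1/4) * ((N:ℂ)+2)^(-s))

lemma Fseq_diff (s : ℂ) (N : ℕ) :
    Fseq s (N+1) - Fseq s N
      = ((-1:ℂ)^N/4) * (((N:ℂ)+1)^(-s) - 2*((N:ℂ)+2)^(-s) + ((N:ℂ)+3)^(-s)) := by
  have hS : Spart s (N+1) = Spart s N + (-1:ℂ)^N * ((N:ℂ)+1)^(-s) := by
    rw [Spart, Spart, Finset.sum_Icc_succ_top (by omega : 1 ≤ N+1)]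
    congr 1
    push_cast
    rw [pow_succ, pow_succ]
    ring
  simp only [Fseq, hS]
  push_cast
  rw [pow_succ]
  ring_nf
lemma Fseq_diff_norm (s : ℂ) (hs : 0 < s.re) (N : ℕ) :
    ‖Fseq s (N+1) - Fseq s N‖ ≤ (‖s‖*‖s+1‖/4) * ((N:ℝ)+1)^(-s.re-2) := by
  rw [Fseq_diff]
  rw [norm_mul]
  have h1 : ‖(-1:ℂ)^N/4‖ = 1/4 := by
    rw [norm_div]
    simp [norm_pow]
  rw [h1]
  have h2 := second_diff_bound s hs (x := ((N:ℝ)+1)) (by simp)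
  push_cast at h2
  have e1 : ((N:ℂ)+1+1) = ((N:ℂ)+2) := by ring
  have e2 : ((N:ℂ)+1+2) = ((N:ℂ)+3) := by ring
  rw [e1, e2] at h2
  calc (1/4) * ‖((N:ℂ)+1)^(-s) - 2*((N:ℂ)+2)^(-s) + ((N:ℂ)+3)^(-s)‖
      ≤ (1/4) * (‖s‖*‖s+1‖ * ((N:ℝ)+1)^(-s.re-2)) := by
        apply mul_le_mul_of_nonneg_left h2 (by norm_num)
    _ = (‖s‖*‖s+1‖/4) * ((N:ℝ)+1)^(-s.re-2) := by ring

lemma Fseq_cauchy_bound (s : ℂ) (hs : 0 < s.re) {N M : ℕ} (hN : 1 ≤ N) (hM : N ≤ M) :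
    ‖Fseq s M - Fseq s N‖ ≤ (‖s‖*‖s+1‖/4) * ((1/(s.re+1)) * (N:ℝ)^(-(s.re+1))) := by
  rw [← sum_Ico_telescope (Fseq s) hM]
  set q : ℝ := s.re + 1 with hq
  have hq0 : 0 < q := by rw [hq]; linarith
  calc ‖∑ k ∈ Finset.Ico N M, (Fseq s (k+1) - Fseq s k)‖
      ≤ ∑ k ∈ Finset.Ico N M, ‖Fseq s (k+1) - Fseq s k‖ := norm_sum_le _ _
    _ ≤ ∑ k ∈ Finset.Ico N M, (‖s‖*‖s+1‖/4) * ((k:ℝ)+1)^(-q-1) := by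
        apply Finset.sum_le_sum
        intro k _
        have := Fseq_diff_norm s hs k
        have hexp : -s.re-2 = -q-1 := by rw [hq]; ring
        rwa [hexp] at this
    _ = (‖s‖*‖s+1‖/4) * ∑ k ∈ Finset.Ico N M, ((k:ℝ)+1)^(-q-1) := by
        rw [Finset.mul_sum]
    _ ≤ (‖s‖*‖s+1‖/4) * ((1/q) * (N:ℝ)^(-q)) := by
        apply mul_le_mul_of_nonneg_left (tail_sum_le q hq0 hN M hM) (by positivity)

lemma eta_exists (s : ℂ) (hs : 0 < s.re) :
    ∃ l : ℂ, Tendsto (fun N => Spart s N) atTop (𝓝 l) ∧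
      (∀ N : ℕ, 1 ≤ N →
        ‖Spart s N - l‖ ≤ ((‖s‖*‖s+1‖/4) * (1/(s.re+1)) + 1) * (N:ℝ)^(-s.re)) ∧
      (∀ N : ℕ, 1 ≤ N →
        ‖Fseq s N - l‖ ≤ ((‖s‖*‖s+1‖/4) * (1/(s.re+1))) * (N:ℝ)^(-(s.re+1))) := by
  set q : ℝ := s.re + 1 with hq
  have hq0 : 0 < q := by rw [hq]; linarith
  set C : ℝ := (‖s‖*‖s+1‖/4) * (1/(s.re+1)) with hC
  have hC0 : 0 ≤ C := by positivity
  -- Cauchy for shifted sequence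
  have hcauchy : CauchySeq (fun N => Fseq s (N+1)) := by
    apply cauchySeq_of_le_tendsto_0 (b := fun N : ℕ => C * ((N:ℝ)+1)^(-q))
    · intro n m N hn hm
      have key : ∀ a b : ℕ, N ≤ a → a ≤ b →
          dist (Fseq s (a+1)) (Fseq s (b+1)) ≤ C * ((N:ℝ)+1)^(-q) := by
        intro a b ha hab
        rw [dist_eq_norm, norm_sub_rev]
        calc ‖Fseq s (b+1) - Fseq s (a+1)‖ ≤ C * ((a:ℝ)+1)^(-q) := by
              have h5 := Fseq_cauchy_bound s hs (N := a+1) (M := b+1) (by omega) (by omega)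
              push_cast at h5
              rw [hC, hq, mul_assoc]
              convert h5 using 4 <;> push_cast <;> ring
          _ ≤ C * ((N:ℝ)+1)^(-q) := by
              apply mul_le_mul_of_nonneg_left _ hC0
              apply Real.rpow_le_rpow_of_nonpos (by positivity) (by exact_mod_cast by omega)
                (by linarith)
      rcases le_total n m with h | h
      · exact key n m hn h
      · rw [dist_comm]; exact key m n hm h
    · have h1 : Tendsto (fun N : ℕ => ((N:ℝ)+1)) atTop atTop :=
        tendsto_atTop_add_const_right _ _ tendsto_natCast_atTop_atTop
      have h2 : Tendsto (fun N : ℕ => ((N:ℝ)+1)^(-q)) atTop (𝓝 0) :=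
        (tendsto_rpow_neg_atTop hq0).comp h1
      simpa using h2.const_mul C
  obtain ⟨l, hl⟩ := cauchySeq_tendsto_of_complete hcauchy
  have hFl : Tendsto (Fseq s) atTop (𝓝 l) := by
    rwa [← Filter.tendsto_add_atTop_iff_nat 1]
  -- tail bound for F
  have hFtail : ∀ N : ℕ, 1 ≤ N → ‖Fseq s N - l‖ ≤ C * (N:ℝ)^(-q) := by
    intro N hN
    have hCb : ∀ M, N ≤ M → ‖Fseq s M - Fseq s N‖ ≤ C * (N:ℝ)^(-q) := by
      intro M hM
      have h5 := Fseq_cauchy_bound s hs hN hM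
      rw [hC, hq, mul_assoc]
      exact h5
    have htendsto : Tendsto (fun M => ‖Fseq s M - Fseq s N‖) atTop (𝓝 ‖l - Fseq s N‖) :=
      ((hFl.sub tendsto_const_nhds).norm)
    rw [norm_sub_rev]
    apply le_of_tendsto htendsto
    filter_upwards [eventually_ge_atTop N] with M hM
    exact hCb M hM
  -- correction term
  have hcorr : ∀ N : ℕ, ‖(-1:ℂ)^N * ((3/4) * ((N:ℂ)+1)^(-s) - (1/4) * ((N:ℂ)+2)^(-s))‖
      ≤ ((N:ℝ)+1)^(-s.re) := by
    intro N
    rw [norm_mul]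
    have h1 : ‖(-1:ℂ)^N‖ = 1 := by simp [norm_pow]
    rw [h1, one_mul]
    have hA : ‖((N:ℂ)+1)^(-s)‖ = ((N:ℝ)+1)^(-s.re) := by
      have : ((N:ℂ)+1) = (((N:ℝ)+1 : ℝ) : ℂ) := by push_cast; ring
      rw [this, Complex.norm_cpow_eq_rpow_re_of_pos (by positivity)]
      simp
    have hB : ‖((N:ℂ)+2)^(-s)‖ = ((N:ℝ)+2)^(-s.re) := by
      have : ((N:ℂ)+2) = (((N:ℝ)+2 : ℝ) : ℂ) := by push_cast; ring
      rw [this, Complex.norm_cpow_eq_rpow_re_of_pos (by positivity)]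
      simp
    calc ‖(3/4) * ((N:ℂ)+1)^(-s) - (1/4) * ((N:ℂ)+2)^(-s)‖
        ≤ ‖(3/4 : ℂ) * ((N:ℂ)+1)^(-s)‖ + ‖(1/4 : ℂ) * ((N:ℂ)+2)^(-s)‖ := norm_sub_le _ _
      _ = (3/4) * ((N:ℝ)+1)^(-s.re) + (1/4) * ((N:ℝ)+2)^(-s.re) := by
          rw [norm_mul, norm_mul, hA, hB]
          norm_num
      _ ≤ (3/4) * ((N:ℝ)+1)^(-s.re) + (1/4) * ((N:ℝ)+1)^(-s.re) := by
          have := Real.rpow_le_rpow_of_nonpos (x := (N:ℝ)+1) (y := (N:ℝ)+2)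
            (by positivity) (by linarith) (by linarith : -s.re ≤ 0)
          linarith
      _ = ((N:ℝ)+1)^(-s.re) := by ring
  refine ⟨l, ?_, ?_, ?_⟩
  · have hcorr0 : Tendsto (fun N : ℕ => (-1:ℂ)^N * ((3/4) * ((N:ℂ)+1)^(-s) - (1/4) * ((N:ℂ)+2)^(-s)))
        atTop (𝓝 0) := by
      apply squeeze_zero_norm hcorr
      have h1 : Tendsto (fun N : ℕ => ((N:ℝ)+1)) atTop atTop :=
        tendsto_atTop_add_const_right _ _ tendsto_natCast_atTop_atTop
      exact (tendsto_rpow_neg_atTop hs).comp h1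
    have : Tendsto (fun N => Fseq s N - (-1:ℂ)^N * ((3/4) * ((N:ℂ)+1)^(-s) - (1/4) * ((N:ℂ)+2)^(-s)))
        atTop (𝓝 (l - 0)) := hFl.sub hcorr0
    rw [sub_zero] at this
    convert this using 2 with N
    rw [Fseq]; ring
  · intro N hN
    have hN1 : (1:ℝ) ≤ (N:ℝ) := by exact_mod_cast hN
    have hiden : Spart s N - l = (Fseq s N - l)
        - (-1:ℂ)^N * ((3/4) * ((N:ℂ)+1)^(-s) - (1/4) * ((N:ℂ)+2)^(-s)) := by
      rw [Fseq]; ring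
    rw [hiden]
    calc ‖(Fseq s N - l) - (-1:ℂ)^N * ((3/4) * ((N:ℂ)+1)^(-s) - (1/4) * ((N:ℂ)+2)^(-s))‖
        ≤ ‖Fseq s N - l‖ + ‖(-1:ℂ)^N * ((3/4) * ((N:ℂ)+1)^(-s) - (1/4) * ((N:ℂ)+2)^(-s))‖ :=
          norm_sub_le _ _
      _ ≤ C * (N:ℝ)^(-q) + ((N:ℝ)+1)^(-s.re) := add_le_add (hFtail N hN) (hcorr N)
      _ ≤ C * (N:ℝ)^(-s.re) + (N:ℝ)^(-s.re) := by
          apply add_le_add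
          · apply mul_le_mul_of_nonneg_left _ hC0
            apply Real.rpow_le_rpow_of_exponent_le hN1
            rw [hq]; linarith
          · exact Real.rpow_le_rpow_of_nonpos (by linarith) (by linarith) (by linarith)
      _ = (C + 1) * (N:ℝ)^(-s.re) := by ring
  · intro N hN
    rw [hC] at hFtail
    have := hFtail N hN
    rwa [hq] at this
noncomputable def etaF (s : ℂ) : ℂ := limUnder atTop (fun N => Spart s N)

lemma etaF_tendsto (s : ℂ) (hs : 0 < s.re) :
    Tendsto (fun N => Spart s N) atTop (𝓝 (etaF s)) ∧
      (∀ N : ℕ, 1 ≤ N →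
        ‖Spart s N - etaF s‖ ≤ ((‖s‖*‖s+1‖/4) * (1/(s.re+1)) + 1) * (N:ℝ)^(-s.re)) ∧
      (∀ N : ℕ, 1 ≤ N →
        ‖Fseq s N - etaF s‖ ≤ ((‖s‖*‖s+1‖/4) * (1/(s.re+1))) * (N:ℝ)^(-(s.re+1))) := by
  obtain ⟨l, hl, hb, hb2⟩ := eta_exists s hs
  have : etaF s = l := hl.limUnder_eq
  rw [this]
  exact ⟨hl, hb, hb2⟩

lemma Spart_differentiable (N : ℕ) : Differentiable ℂ (fun z => Spart z N) := by
  apply Differentiable.fun_sum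
  intro n hn
  have hn0 : (n:ℂ) ≠ 0 := by
    have h1 : 1 ≤ n := (Finset.mem_Icc.mp hn).1
    exact_mod_cast Nat.cast_ne_zero.mpr (by omega)
  exact (differentiable_neg.const_cpow (Or.inl hn0)).const_mul _

def Uhp : Set ℂ := {z : ℂ | 0 < z.re}

lemma isOpen_Uhp : IsOpen Uhp := isOpen_lt continuous_const Complex.continuous_re

lemma etaF_differentiableOn : DifferentiableOn ℂ etaF Uhp := by
  have htlu : TendstoLocallyUniformlyOn (fun N z => Spart z N) etaF atTop Uhp := by
    rw [tendstoLocallyUniformlyOn_iff_forall_isCompact isOpen_Uhp]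
    intro K hKU hK
    rcases K.eq_empty_or_nonempty with rfl | hne
    · simp [tendstoUniformlyOn_empty]
    obtain ⟨z₀, hz₀K, hz₀min⟩ := hK.exists_isMinOn hne Complex.continuous_re.continuousOn
    obtain ⟨z₁, hz₁K, hz₁max⟩ := hK.exists_isMaxOn hne continuous_norm.continuousOn
    rw [isMinOn_iff] at hz₀min
    rw [isMaxOn_iff] at hz₁max
    set δ : ℝ := z₀.re with hδ
    set R : ℝ := ‖z₁‖ with hR
    have hδ0 : 0 < δ := hKU hz₀K
    have hR0 : 0 ≤ R := norm_nonneg _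
    set M0 : ℝ := (R*(R+1)/4) * 1 + 1 with hM0
    have key : ∀ N : ℕ, 1 ≤ N → ∀ z ∈ K, ‖Spart z N - etaF z‖ ≤ M0 * (N:ℝ)^(-δ) := by
      intro N hN z hzK
      have hz : 0 < z.re := hKU hzK
      have hN1 : (1:ℝ) ≤ (N:ℝ) := by exact_mod_cast hN
      have h1 := (etaF_tendsto z hz).2.1 N hN
      have hCz : (‖z‖*‖z+1‖/4) * (1/(z.re+1)) + 1 ≤ M0 := by
        rw [hM0]
        have h2 : ‖z‖ ≤ R := hz₁max z hzK
        have h3 : ‖z+1‖ ≤ R + 1 := le_trans (norm_add_le _ _) (by rw [norm_one]; linarith)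
        have h4 : 1/(z.re+1) ≤ 1 := by
          rw [div_le_one (by linarith)]; linarith
        have h5 : ‖z‖*‖z+1‖/4 ≤ R*(R+1)/4 := by
          apply div_le_div_of_nonneg_right _ (by norm_num)  -- maybe wrong name
          exact mul_le_mul h2 h3 (norm_nonneg _) hR0
        have h6' : ‖z‖*‖z+1‖/4 * (1/(z.re+1)) ≤ R*(R+1)/4 * 1 :=
          mul_le_mul h5 h4 (by positivity) (by positivity)
        linarith
      have h6 : (N:ℝ)^(-z.re) ≤ (N:ℝ)^(-δ) := by
        apply Real.rpow_le_rpow_of_exponent_le hN1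
        have := hz₀min z hzK
        linarith
      calc ‖Spart z N - etaF z‖ ≤ ((‖z‖*‖z+1‖/4) * (1/(z.re+1)) + 1) * (N:ℝ)^(-z.re) := h1
        _ ≤ M0 * (N:ℝ)^(-δ) := by
            apply mul_le_mul hCz h6 (Real.rpow_nonneg (by linarith) _)
            rw [hM0]; positivity
    rw [Metric.tendstoUniformlyOn_iff]
    intro ε hε
    have hlim : Tendsto (fun N : ℕ => M0 * (N:ℝ)^(-δ)) atTop (𝓝 0) := by
      have h1 := (tendsto_rpow_neg_atTop hδ0).comp tendsto_natCast_atTop_atTop (α := ℕ)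
      simpa using h1.const_mul M0
    filter_upwards [hlim.eventually (gt_mem_nhds hε), eventually_ge_atTop 1] with N hNlt hN1 z hzK
    rw [dist_comm, dist_eq_norm]
    exact lt_of_le_of_lt (key N hN1 z hzK) hNlt
  exact htlu.differentiableOn
    (Filter.Eventually.of_forall fun N => (Spart_differentiable N).differentiableOn) isOpen_Uhp
noncomputable def PhiAlt : ZMod 2 → ℂ := fun j => if j = 0 then -1 else 1

lemma PhiAlt_sum_zero : ∑ j : ZMod 2, PhiAlt j = 0 := by
  have h : ∑ j : ZMod 2, PhiAlt j = PhiAlt 0 + PhiAlt 1 := Fin.sum_univ_two PhiAlt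
  have h1 : (1 : ZMod 2) ≠ 0 := by decide
  rw [h]
  norm_num [PhiAlt, h1]

lemma PhiAlt_nat (n : ℕ) : PhiAlt (n : ZMod 2) = (-1:ℂ)^(n+1) := by
  rcases Nat.even_or_odd n with he | ho
  · have h0 : ((n : ZMod 2)) = 0 := by
      rw [ZMod.natCast_eq_zero_iff]
      exact he.two_dvd
    simp only [PhiAlt, h0, if_pos]
    have hodd : Odd (n+1) := Even.add_one he
    rw [hodd.neg_one_pow]
  · have h0 : ((n : ZMod 2)) ≠ 0 := by
      rw [Ne, ZMod.natCast_eq_zero_iff]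
      obtain ⟨k, hk⟩ := ho
      omega
    simp only [PhiAlt, if_neg h0]
    have heven : Even (n+1) := Odd.add_one ho
    rw [heven.neg_one_pow]
lemma Spart_eq_sum_range (z : ℂ) (N : ℕ) :
    Spart z N = ∑ i ∈ Finset.range (N+1), LSeries.term (fun n => PhiAlt n) z i := by
  have hset : Finset.Icc 1 N = (Finset.range (N+1)).erase 0 := by
    ext i
    simp [Nat.lt_succ_iff]
    omega
  rw [Spart, hset, ← Finset.sum_erase (Finset.range (N+1)) (LSeries.term_zero (fun n => PhiAlt (n : ZMod 2)) z)]
  apply Finset.sum_congr rfl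
  intro i hi
  have hi0 : i ≠ 0 := (Finset.mem_erase.mp hi).1
  rw [LSeries.term_of_ne_zero hi0, PhiAlt_nat, Complex.cpow_neg, div_eq_mul_inv]

lemma Spart_tendsto_LFunction {z : ℂ} (hz : 1 < z.re) :
    Tendsto (fun N => Spart z N) atTop (𝓝 (ZMod.LFunction PhiAlt z)) := by
  have hsummable := ZMod.LSeriesSummable_of_one_lt_re PhiAlt hz
  have hhs : HasSum (LSeries.term (fun n => PhiAlt n) z) (LSeries (fun n => PhiAlt n) z) :=
    hsummable.hasSum
  have h1 := hhs.tendsto_sum_nat.comp (tendsto_add_atTop_nat 1)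
  rw [ZMod.LFunction_eq_LSeries PhiAlt hz]
  convert h1 using 2 with N
  exact Spart_eq_sum_range z N

lemma etaF_eqOn : Set.EqOn etaF (ZMod.LFunction PhiAlt) Uhp := by
  have hf : AnalyticOnNhd ℂ etaF Uhp := etaF_differentiableOn.analyticOnNhd isOpen_Uhp
  have hg : AnalyticOnNhd ℂ (ZMod.LFunction PhiAlt) Uhp :=
    ((ZMod.differentiable_LFunction_of_sum_zero PhiAlt_sum_zero).differentiableOn).analyticOnNhd
      isOpen_Uhp
  have hpre : IsPreconnected Uhp := (convex_halfSpace_re_gt 0).isPreconnected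
  have h2 : (2:ℂ) ∈ Uhp := by
    show (0:ℝ) < (2:ℂ).re
    norm_num
  have heq : etaF =ᶠ[𝓝 (2:ℂ)] ZMod.LFunction PhiAlt := by
    have hopen : IsOpen {w : ℂ | 1 < w.re} := isOpen_lt continuous_const Complex.continuous_re
    have hmem : {w : ℂ | 1 < w.re} ∈ 𝓝 (2:ℂ) := hopen.mem_nhds (by norm_num)
    filter_upwards [hmem] with w hw
    have hw' : 1 < w.re := hw
    have hw0 : 0 < w.re := by linarith
    exact tendsto_nhds_unique (etaF_tendsto w hw0).1 (Spart_tendsto_LFunction hw')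
  exact hf.eqOn_of_preconnected_of_eventuallyEq hg hpre h2 heq

lemma LFunction_PhiAlt {z : ℂ} (hz : z ≠ 1) :
    ZMod.LFunction PhiAlt z = (1 - (2:ℂ)^((1:ℂ)-z)) * riemannZeta z := by
  set χ : DirichletCharacter ℂ 2 := 1 with hχ
  set δ : ZMod 2 → ℂ := fun j => if j = 0 then 1 else 0 with hδ
  have hdecomp : PhiAlt = fun j => χ j - δ j := by
    funext j
    fin_cases j
    · have hnu : ¬ IsUnit (0 : ZMod 2) := by
        rw [isUnit_zero_iff]
        decide
      show PhiAlt (0 : ZMod 2) = χ 0 - δ 0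
      simp [PhiAlt, hδ, χ.map_nonunit hnu]
    · have h1 : (1 : ZMod 2) ≠ 0 := by decide
      show PhiAlt (1 : ZMod 2) = χ 1 - δ 1
      simp [PhiAlt, hδ, if_neg h1]
  have hlin : ZMod.LFunction PhiAlt z = ZMod.LFunction (χ ·) z - ZMod.LFunction δ z := by
    rw [hdecomp]
    simp only [ZMod.LFunction, sub_mul, Finset.sum_sub_distrib, mul_sub]
  have hδval : ZMod.LFunction δ z = (2:ℂ)^(-z) * riemannZeta z := by
    rw [ZMod.LFunction]
    have hsum : ∑ j : ZMod 2, δ j * HurwitzZeta.hurwitzZeta (ZMod.toAddCircle j) z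
        = HurwitzZeta.hurwitzZeta (ZMod.toAddCircle (0 : ZMod 2)) z := by
      rw [Fintype.sum_eq_single (0 : ZMod 2)]
      · simp [hδ]
      · intro j hj
        simp [hδ, if_neg hj]
    rw [hsum, map_zero, HurwitzZeta.hurwitzZeta_zero]
    norm_num
  have hχval : ZMod.LFunction (χ ·) z = (1 - (2:ℂ)^(-z)) * riemannZeta z := by
    have := DirichletCharacter.LFunctionTrivChar_eq_mul_riemannZeta (N := 2) hz
    rw [DirichletCharacter.LFunctionTrivChar, DirichletCharacter.LFunction] at this
    rw [Nat.Prime.primeFactors Nat.prime_two, Finset.prod_singleton] at this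
    have hcast : ((2:ℕ):ℂ) = (2:ℂ) := by norm_num
    rw [hcast] at this
    exact this
  rw [hlin, hχval, hδval]
  have h2z : (2:ℂ)^((1:ℂ)-z) = 2 * (2:ℂ)^(-z) := by
    rw [sub_eq_add_neg, Complex.cpow_add _ _ (by norm_num : (2:ℂ) ≠ 0), Complex.cpow_one]
  rw [h2z]
  ring

lemma etaF_zero (s : ℂ) (hs : 0 < s.re) (hζ : riemannZeta s = 0) : etaF s = 0 := by
  have hs1 : s ≠ 1 := by
    intro h
    exact riemannZeta_ne_zero_of_one_le_re (by rw [h]; norm_num) hζ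
  have h1 : etaF s = ZMod.LFunction PhiAlt s := etaF_eqOn hs
  rw [h1, LFunction_PhiAlt hs1, hζ, mul_zero]
lemma corr_norm_bounds (s : ℂ) (hs : 0 < s.re) (N : ℕ) :
    (1/2) * ((N:ℝ)+1)^(-s.re)
      ≤ ‖(-1:ℂ)^N * ((3/4) * ((N:ℂ)+1)^(-s) - (1/4) * ((N:ℂ)+2)^(-s))‖ ∧
    ‖(-1:ℂ)^N * ((3/4) * ((N:ℂ)+1)^(-s) - (1/4) * ((N:ℂ)+2)^(-s))‖ ≤ ((N:ℝ)+1)^(-s.re) := by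
  have h1 : ‖(-1:ℂ)^N‖ = 1 := by simp [norm_pow]
  have hA : ‖((N:ℂ)+1)^(-s)‖ = ((N:ℝ)+1)^(-s.re) := by
    have : ((N:ℂ)+1) = (((N:ℝ)+1 : ℝ) : ℂ) := by push_cast; ring
    rw [this, Complex.norm_cpow_eq_rpow_re_of_pos (by positivity)]
    simp
  have hB : ‖((N:ℂ)+2)^(-s)‖ = ((N:ℝ)+2)^(-s.re) := by
    have : ((N:ℂ)+2) = (((N:ℝ)+2 : ℝ) : ℂ) := by push_cast; ring
    rw [this, Complex.norm_cpow_eq_rpow_re_of_pos (by positivity)]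
    simp
  have hBA : ((N:ℝ)+2)^(-s.re) ≤ ((N:ℝ)+1)^(-s.re) :=
    Real.rpow_le_rpow_of_nonpos (by positivity) (by linarith) (by linarith)
  have hApos : 0 ≤ ((N:ℝ)+1)^(-s.re) := Real.rpow_nonneg (by positivity) _
  constructor
  · rw [norm_mul, h1, one_mul]
    have hge : ‖(3/4 : ℂ) * ((N:ℂ)+1)^(-s)‖ - ‖(1/4 : ℂ) * ((N:ℂ)+2)^(-s)‖
        ≤ ‖(3/4) * ((N:ℂ)+1)^(-s) - (1/4) * ((N:ℂ)+2)^(-s)‖ := norm_sub_norm_le _ _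
    rw [norm_mul, norm_mul, hA, hB] at hge
    have h34 : ‖(3/4 : ℂ)‖ = 3/4 := by norm_num
    have h14 : ‖(1/4 : ℂ)‖ = 1/4 := by norm_num
    rw [h34, h14] at hge
    nlinarith
  · rw [norm_mul, h1, one_mul]
    calc ‖(3/4) * ((N:ℂ)+1)^(-s) - (1/4) * ((N:ℂ)+2)^(-s)‖
        ≤ ‖(3/4 : ℂ) * ((N:ℂ)+1)^(-s)‖ + ‖(1/4 : ℂ) * ((N:ℂ)+2)^(-s)‖ := norm_sub_le _ _
      _ = (3/4) * ((N:ℝ)+1)^(-s.re) + (1/4) * ((N:ℝ)+2)^(-s.re) := by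
          rw [norm_mul, norm_mul, hA, hB]
          norm_num
      _ ≤ ((N:ℝ)+1)^(-s.re) := by nlinarith

lemma log_ratio_tendsto :
    Tendsto (fun N : ℕ => Real.log ((N:ℝ)+1) / Real.log N) atTop (𝓝 1) := by
  have h1 : Tendsto (fun N : ℕ => Real.log N) atTop atTop :=
    Real.tendsto_log_atTop.comp tendsto_natCast_atTop_atTop
  have h2 : Tendsto (fun N : ℕ => (Real.log N)⁻¹) atTop (𝓝 0) := h1.inv_tendsto_atTop
  have h3 : Tendsto (fun N : ℕ => Real.log (((N:ℝ)+1)/N)) atTop (𝓝 0) := by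
    have hq : Tendsto (fun N : ℕ => ((N:ℝ)+1)/N) atTop (𝓝 1) := by
      have := (tendsto_one_div_atTop_nhds_zero_nat (𝕜 := ℝ)).const_add 1
      rw [add_zero] at this
      apply this.congr'
      filter_upwards [eventually_ge_atTop 1] with N hN
      have hN0 : (N:ℝ) ≠ 0 := by
        have : (1:ℝ) ≤ (N:ℝ) := by exact_mod_cast hN
        linarith
      field_simp
    have hcont := (Real.continuousAt_log one_ne_zero).tendsto
    have := hcont.comp hq
    rw [Real.log_one] at this
    exact this
  have hmain : Tendsto (fun N : ℕ => 1 + Real.log (((N:ℝ)+1)/N) * (Real.log N)⁻¹)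
      atTop (𝓝 1) := by
    have := (h3.mul h2).const_add 1
    simpa using this
  apply hmain.congr'
  filter_upwards [eventually_ge_atTop 2] with N hN
  have hN1 : (1:ℝ) < (N:ℝ) := by exact_mod_cast hN
  have hlogN : 0 < Real.log N := Real.log_pos hN1
  have hN0 : (N:ℝ) ≠ 0 := by positivity
  have hN10 : ((N:ℝ)+1) ≠ 0 := by positivity
  rw [Real.log_div hN10 hN0]
  field_simp
  ring
/-- If `s` with `Re s = β > 0` is a zero of the Riemann zeta function, then the
partial sums `S_N(s) = ∑_{n=1}^N (-1)^{n-1} n^{-s}` satisfy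
`lim_{N→∞} -(1/log₂ N) · ln |S_N(s)| = β · ln 2`. -/
theorem free_energy_at_zero (s : ℂ) (hs : 0 < s.re) (hζ : riemannZeta s = 0) :
    Tendsto
      (fun N : ℕ =>
        -(1 / Real.logb 2 N) *
          Real.log ‖∑ n ∈ Finset.Icc 1 N, (-1 : ℂ) ^ (n + 1) * (n : ℂ) ^ (-s)‖)
      atTop (𝓝 (s.re * Real.log 2)) := by
  show Tendsto (fun N : ℕ => -(1 / Real.logb 2 N) * Real.log ‖Spart s N‖) atTop
    (𝓝 (s.re * Real.log 2))
  have hβ : 0 < s.re := hs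
  obtain ⟨-, -, hFb⟩ := etaF_tendsto s hs
  have hzero : etaF s = 0 := etaF_zero s hs hζ
  rw [hzero] at hFb
  simp only [sub_zero] at hFb
  set β : ℝ := s.re with hβdef
  set C : ℝ := (‖s‖*‖s+1‖/4) * (1/(β+1)) with hCdef
  have hC0 : 0 ≤ C := by positivity
  -- key eventual bound
  have hkey : ∀ᶠ N : ℕ in atTop, C * (N:ℝ)^(-(β+1)) ≤ (1/4) * ((N:ℝ)+1)^(-β) := by
    filter_upwards [eventually_ge_atTop 1, eventually_ge_atTop (⌈4*C*(2:ℝ)^β⌉₊)]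
      with N h1 h2
    have hN1 : (1:ℝ) ≤ (N:ℝ) := by exact_mod_cast h1
    have hN0 : (0:ℝ) < (N:ℝ) := by linarith
    have hceil : 4*C*(2:ℝ)^β ≤ (N:ℝ) := le_trans (Nat.le_ceil _) (by exact_mod_cast h2)
    have h2β : (0:ℝ) < (2:ℝ)^β := Real.rpow_pos_of_pos two_pos β
    have e1 : (N:ℝ)^(-(β+1)) = (N:ℝ)^(-β) * (N:ℝ)⁻¹ := by
      rw [show -(β+1) = -β + (-1) by ring, Real.rpow_add hN0, Real.rpow_neg_one]
    have e2 : (2:ℝ)^(-β) * (N:ℝ)^(-β) = ((2:ℝ)*(N:ℝ))^(-β) :=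
      (Real.mul_rpow (by norm_num) hN0.le).symm
    have e3 : ((2:ℝ)*(N:ℝ))^(-β) ≤ ((N:ℝ)+1)^(-β) :=
      Real.rpow_le_rpow_of_nonpos (by positivity) (by linarith) (by linarith)
    have hstep : C * (N:ℝ)⁻¹ ≤ (1/4) * (2:ℝ)^(-β) := by
      rw [Real.rpow_neg (by norm_num : (0:ℝ) ≤ 2), ← div_eq_mul_inv, div_le_iff₀ hN0]
      have hmul : (1/4) * ((2:ℝ)^β)⁻¹ * (4*C*(2:ℝ)^β) ≤ (1/4) * ((2:ℝ)^β)⁻¹ * (N:ℝ) :=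
        mul_le_mul_of_nonneg_left hceil (by positivity)
      have hcalc : (1/4) * ((2:ℝ)^β)⁻¹ * (4*C*(2:ℝ)^β) = C := by
        field_simp
      linarith
    calc C * (N:ℝ)^(-(β+1)) = (C * (N:ℝ)⁻¹) * (N:ℝ)^(-β) := by rw [e1]; ring
      _ ≤ ((1/4) * (2:ℝ)^(-β)) * (N:ℝ)^(-β) :=
          mul_le_mul_of_nonneg_right hstep (Real.rpow_nonneg hN0.le _)
      _ = (1/4) * ((2:ℝ)*(N:ℝ))^(-β) := by rw [← e2]; ring
      _ ≤ (1/4) * ((N:ℝ)+1)^(-β) := by linarith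
  have hiden : ∀ N : ℕ, Spart s N
      = Fseq s N - (-1:ℂ)^N * ((3/4)*((N:ℂ)+1)^(-s) - (1/4)*((N:ℂ)+2)^(-s)) := by
    intro N
    rw [Fseq]
    ring
  -- sandwich
  have hSlow : ∀ᶠ N : ℕ in atTop, (1/4) * ((N:ℝ)+1)^(-β) ≤ ‖Spart s N‖ := by
    filter_upwards [hkey, eventually_ge_atTop 1] with N hk h1
    have hcorr := (corr_norm_bounds s hs N).1
    have hF : ‖Fseq s N‖ ≤ (1/4) * ((N:ℝ)+1)^(-β) := le_trans (hFb N h1) hk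
    rw [hiden N]
    have hge : ‖(-1:ℂ)^N * ((3/4)*((N:ℂ)+1)^(-s) - (1/4)*((N:ℂ)+2)^(-s))‖ - ‖Fseq s N‖
        ≤ ‖Fseq s N - (-1:ℂ)^N * ((3/4)*((N:ℂ)+1)^(-s) - (1/4)*((N:ℂ)+2)^(-s))‖ := by
      rw [norm_sub_rev]
      exact norm_sub_norm_le _ _
    linarith
  have hSup : ∀ᶠ N : ℕ in atTop, ‖Spart s N‖ ≤ 2 * ((N:ℝ)+1)^(-β) := by
    filter_upwards [hkey, eventually_ge_atTop 1] with N hk h1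
    have hcorr := (corr_norm_bounds s hs N).2
    have hF : ‖Fseq s N‖ ≤ (1/4) * ((N:ℝ)+1)^(-β) := le_trans (hFb N h1) hk
    rw [hiden N]
    have hle := norm_sub_le (Fseq s N) ((-1:ℂ)^N * ((3/4)*((N:ℂ)+1)^(-s) - (1/4)*((N:ℂ)+2)^(-s)))
    have hApos : 0 ≤ ((N:ℝ)+1)^(-β) := Real.rpow_nonneg (by positivity) _
    linarith
  -- limits of the sandwich bounds
  have hL2 : 0 < Real.log 2 := Real.log_pos one_lt_two
  have hinv : Tendsto (fun N : ℕ => (Real.log N)⁻¹) atTop (𝓝 0) :=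
    (Real.tendsto_log_atTop.comp tendsto_natCast_atTop_atTop).inv_tendsto_atTop
  have hlo : Tendsto (fun N : ℕ =>
      (Real.log 2 / Real.log N) * (β * Real.log ((N:ℝ)+1) - Real.log 2))
      atTop (𝓝 (β * Real.log 2)) := by
    have h := (log_ratio_tendsto.const_mul (β * Real.log 2)).sub
      (hinv.const_mul (Real.log 2 * Real.log 2))
    rw [mul_one, mul_zero, sub_zero] at h
    apply h.congr
    intro N
    ring
  have hhi : Tendsto (fun N : ℕ =>
      (Real.log 2 / Real.log N) * (β * Real.log ((N:ℝ)+1) + Real.log 4))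
      atTop (𝓝 (β * Real.log 2)) := by
    have h := (log_ratio_tendsto.const_mul (β * Real.log 2)).add
      (hinv.const_mul (Real.log 2 * Real.log 4))
    rw [mul_one, mul_zero, add_zero] at h
    apply h.congr
    intro N
    ring
  -- eventual inequalities
  have hevlo : ∀ᶠ N : ℕ in atTop,
      (Real.log 2 / Real.log N) * (β * Real.log ((N:ℝ)+1) - Real.log 2)
        ≤ -(1 / Real.logb 2 N) * Real.log ‖Spart s N‖ := by
    filter_upwards [hSlow, hSup, eventually_ge_atTop 2] with N hlow hup hN2
    have hN1 : (1:ℝ) < (N:ℝ) := by exact_mod_cast hN2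
    have hlogN : 0 < Real.log N := Real.log_pos hN1
    have hP : (0:ℝ) < ((N:ℝ)+1)^(-β) := Real.rpow_pos_of_pos (by positivity) _
    have hSpos : 0 < ‖Spart s N‖ := lt_of_lt_of_le (by positivity) hlow
    have hlog_up : Real.log ‖Spart s N‖ ≤ Real.log 2 - β * Real.log ((N:ℝ)+1) := by
      have h := Real.log_le_log hSpos hup
      rw [Real.log_mul (by norm_num) (ne_of_gt hP), Real.log_rpow (by positivity)] at h
      linarith
    have ht : -(1 / Real.logb 2 N) * Real.log ‖Spart s N‖
        = (Real.log 2 / Real.log N) * (-(Real.log ‖Spart s N‖)) := by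
      rw [Real.logb, one_div_div]
      ring
    rw [ht]
    apply mul_le_mul_of_nonneg_left _ (by positivity)
    linarith
  have hevhi : ∀ᶠ N : ℕ in atTop,
      -(1 / Real.logb 2 N) * Real.log ‖Spart s N‖
        ≤ (Real.log 2 / Real.log N) * (β * Real.log ((N:ℝ)+1) + Real.log 4) := by
    filter_upwards [hSlow, eventually_ge_atTop 2] with N hlow hN2
    have hN1 : (1:ℝ) < (N:ℝ) := by exact_mod_cast hN2
    have hlogN : 0 < Real.log N := Real.log_pos hN1
    have hP : (0:ℝ) < ((N:ℝ)+1)^(-β) := Real.rpow_pos_of_pos (by positivity) _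
    have hSpos : 0 < ‖Spart s N‖ := lt_of_lt_of_le (by positivity) hlow
    have hlog_low : -Real.log 4 - β * Real.log ((N:ℝ)+1) ≤ Real.log ‖Spart s N‖ := by
      have h := Real.log_le_log (by positivity) hlow
      rw [Real.log_mul (by norm_num) (ne_of_gt hP), Real.log_rpow (by positivity)] at h
      have h14 : Real.log (1/4 : ℝ) = -Real.log 4 := by
        rw [show (1/4 : ℝ) = (4:ℝ)⁻¹ by norm_num, Real.log_inv]
      rw [h14] at h
      linarith
    have ht : -(1 / Real.logb 2 N) * Real.log ‖Spart s N‖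
        = (Real.log 2 / Real.log N) * (-(Real.log ‖Spart s N‖)) := by
      rw [Real.logb, one_div_div]
      ring
    rw [ht]
    apply mul_le_mul_of_nonneg_left _ (by positivity)
    linarith
  exact tendsto_of_tendsto_of_tendsto_of_le_of_le' hlo hhi hevlo hevhi
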